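/- For all bounded functions u : H → ℝ on a Hilbert space H and all s, t ≥ 0, the inf-convolution operators satisfy the semigroup property T_t (T_s u) = T_{t+s} u, where T_t u(x) = inf_y (u(y) + ‖y - x‖²/t) for t > 0 and T_0 u = u. -/

import Mathlib

noncomputable def infConv {H : Type*} [NormedAddCommGroup H] [InnerProductSpace ℝ H]
    (t : ℝ) (u : H → ℝ) (x : H) : ℝ :=
  if t = 0 then u x else ⨅ y : H, (u y + ‖y - x‖ ^ 2 / t)

theorem infConv_semigroup {H : Type*} [NormedAddCommGroup H] [InnerProductSpace ℝ H]
    (u : H → ℝ) (hu : ∃ C : ℝ, ∀ x, |u x| ≤ C)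
    (s t : ℝ) (hs : 0 ≤ s) (ht : 0 ≤ t) :
    infConv t (infConv s u) = infConv (t + s) u := by
  obtain ⟨C, hC⟩ := hu
  rcases eq_or_lt_of_le hs with rfl | hs0
  · have h0 : infConv 0 u = u := by funext y; simp [infConv]
    rw [h0, add_zero]
  rcases eq_or_lt_of_le ht with rfl | ht0
  · funext x
    simp [infConv, hs0.ne']
  · funext x
    have hst : (0:ℝ) < t + s := by linarith
    have hbdd : ∀ y : H, BddBelow (Set.range fun z => u z + ‖z - y‖ ^ 2 / s) := by
      intro y
      refine ⟨-C, ?_⟩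
      rintro _ ⟨z, rfl⟩
      have h1 := (abs_le.1 (hC z)).1
      have h2 : (0:ℝ) ≤ ‖z - y‖ ^ 2 / s := div_nonneg (sq_nonneg _) hs
      linarith
    have hTs : ∀ y : H, infConv s u y = ⨅ z : H, u z + ‖z - y‖ ^ 2 / s := by
      intro y; simp [infConv, hs0.ne']
    have hTs_lb : ∀ y : H, -C ≤ infConv s u y := by
      intro y
      rw [hTs y]
      refine le_ciInf fun z => ?_
      have h1 := (abs_le.1 (hC z)).1
      have h2 : (0:ℝ) ≤ ‖z - y‖ ^ 2 / s := div_nonneg (sq_nonneg _) hs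
      linarith
    have hTs_le : ∀ y z : H, infConv s u y ≤ u z + ‖z - y‖ ^ 2 / s := by
      intro y z
      rw [hTs y]
      exact ciInf_le (hbdd y) z
    have houter : BddBelow (Set.range fun y : H => infConv s u y + ‖y - x‖ ^ 2 / t) := by
      refine ⟨-C, ?_⟩
      rintro _ ⟨y, rfl⟩
      have h1 := hTs_lb y
      have h2 : (0:ℝ) ≤ ‖y - x‖ ^ 2 / t := div_nonneg (sq_nonneg _) ht
      linarith
    have hL : infConv t (infConv s u) x = ⨅ y : H, infConv s u y + ‖y - x‖ ^ 2 / t := by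
      simp [infConv, ht0.ne']
    have hR : infConv (t + s) u x = ⨅ z : H, u z + ‖z - x‖ ^ 2 / (t + s) := by
      simp [infConv, hst.ne']
    rw [hL, hR]
    refine le_antisymm ?_ ?_
    · -- LHS ≤ RHS
      refine le_ciInf fun z => ?_
      set y₀ : H := (s / (t + s)) • x + (t / (t + s)) • z with hy₀
      have hzy : z - y₀ = (s / (t + s)) • (z - x) := by
        rw [hy₀]
        have : s / (t + s) + t / (t + s) = 1 := by field_simp; ring
        rw [smul_sub]
        rw [sub_add_eq_sub_sub]
        nth_rewrite 1 [show z = (1:ℝ) • z from (one_smul ℝ z).symm]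
        rw [← this]
        module
      have hyx : y₀ - x = (t / (t + s)) • (z - x) := by
        rw [hy₀]
        have : s / (t + s) + t / (t + s) = 1 := by field_simp; ring
        rw [smul_sub]
        nth_rewrite 2 [show x = (1:ℝ) • x from (one_smul ℝ x).symm]
        rw [← this]
        module
      have hnzy : ‖z - y₀‖ ^ 2 = (s / (t + s)) ^ 2 * ‖z - x‖ ^ 2 := by
        rw [hzy, norm_smul, Real.norm_eq_abs, mul_pow, sq_abs]
      have hnyx : ‖y₀ - x‖ ^ 2 = (t / (t + s)) ^ 2 * ‖z - x‖ ^ 2 := by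
        rw [hyx, norm_smul, Real.norm_eq_abs, mul_pow, sq_abs]
      have step : (⨅ y : H, infConv s u y + ‖y - x‖ ^ 2 / t) ≤
          infConv s u y₀ + ‖y₀ - x‖ ^ 2 / t := ciInf_le houter y₀
      refine step.trans ?_
      have step2 : infConv s u y₀ ≤ u z + ‖z - y₀‖ ^ 2 / s := hTs_le y₀ z
      have hcalc : ‖z - y₀‖ ^ 2 / s + ‖y₀ - x‖ ^ 2 / t = ‖z - x‖ ^ 2 / (t + s) := by
        rw [hnzy, hnyx]
        field_simp
        ring
      linarith
    · -- RHS ≤ LHS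
      refine le_ciInf fun y => ?_
      rw [hTs y, ciInf_add (hbdd y)]
      refine le_ciInf fun z => ?_
      have hbR : BddBelow (Set.range fun z : H => u z + ‖z - x‖ ^ 2 / (t + s)) := by
        refine ⟨-C, ?_⟩
        rintro _ ⟨w, rfl⟩
        have h1 := (abs_le.1 (hC w)).1
        have h2 : (0:ℝ) ≤ ‖w - x‖ ^ 2 / (t + s) := div_nonneg (sq_nonneg _) hst.le
        linarith
      refine (ciInf_le hbR z).trans ?_
      have htri : ‖z - x‖ ≤ ‖z - y‖ + ‖y - x‖ := by
        have := norm_add_le (z - y) (y - x)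
        simpa using this
      have key : ‖z - x‖ ^ 2 / (t + s) ≤ ‖z - y‖ ^ 2 / s + ‖y - x‖ ^ 2 / t := by
        have hc2 : ‖z - x‖ ^ 2 ≤ (‖z - y‖ + ‖y - x‖) ^ 2 :=
          pow_le_pow_left₀ (norm_nonneg _) htri 2
        rw [div_add_div _ _ hs0.ne' ht0.ne', div_le_div_iff₀ hst (mul_pos hs0 ht0)]
        nlinarith [hc2, sq_nonneg (‖z - y‖ * t - ‖y - x‖ * s), mul_pos hs0 ht0]
      linarith
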